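/- For all n ≥ 0 and d ≥ 2, the bivariate d-Hoggatt polynomials satisfy the recurrence (x ⊕_d y)^{(n+1)} = (x+y)·(x ⊕_d y)^{(n)} + Σ_{k=1}^{n} (1/⟨n+1-k⟩_d) ⟨n choose k⟩_d (Σ_{i=1}^{d-1} ⟨n+1-k⟩_{d-i} ⟨k⟩_i) x^{n+1-k} y^k. -/

import Mathlib

open MvPolynomial Finset

/-- The m-th simplicial j-polytopic number ⟨m⟩_j = C(m+j-1, j). -/
def sp (j m : ℕ) : ℕ := Nat.choose (m + j - 1) j

/-- The d-simplitorial ⟨n⟩_d! = ∏_{k=1}^n ⟨k⟩_d, as a rational number. -/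
def spFact (d n : ℕ) : ℚ := ∏ k ∈ Finset.Icc 1 n, (sp d k : ℚ)

/-- The d-Hoggatt binomial coefficient ⟨n choose k⟩_d. -/
def hog (d n k : ℕ) : ℚ := spFact d n / (spFact d k * spFact d (n - k))

/-- The bivariate d-Hoggatt polynomial (x ⊕_d y)^{(n)} in ℚ[x,y]. -/
noncomputable def bivarHoggatt (d n : ℕ) : MvPolynomial (Fin 2) ℚ :=
  ∑ k ∈ Finset.range (n + 1), C (hog d n k) * X 0 ^ (n - k) * X 1 ^ k

lemma hockey (b d : ℕ) : ∑ j ∈ range (d+1), (b+j).choose j = (b+d+1).choose d := by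
  induction d with
  | zero => simp
  | succ d ih =>
    rw [Finset.sum_range_succ, ih, show b+(d+1)+1 = (b+d+1)+1 by ring,
      show b+(d+1) = b+d+1 by ring,
      show ((b+d+1)+1).choose (d+1) = (b+d+1).choose d + (b+d+1).choose (d+1) from
        Nat.choose_succ_succ _ _]

lemma vand (a b d : ℕ) :
    ∑ i ∈ range (d+1), (a+i).choose i * (b+(d-i)).choose (d-i) = (a+b+d+1).choose d := by
  induction a generalizing d with
  | zero =>
    simp only [Nat.zero_add, Nat.choose_self, one_mul]
    have h := Finset.sum_range_reflect (fun j => (b+j).choose j) (d+1)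
    simp only [Nat.add_sub_cancel] at h
    rw [← hockey b d, ← h]
  | succ a ih =>
    induction d with
    | zero => simp
    | succ d ihd =>
      rw [Finset.sum_range_succ']
      have step : ∀ i ∈ range (d+1),
          (a+1+(i+1)).choose (i+1) * (b+(d+1-(i+1))).choose (d+1-(i+1)) =
          (a+(i+1)).choose (i+1) * (b+(d-i)).choose (d-i)
            + (a+1+i).choose i * (b+(d-i)).choose (d-i) := by
        intro i hi
        rw [show a+1+(i+1) = (a+(i+1)) + 1 by ring, show d+1-(i+1) = d-i by omega,
          Nat.choose_succ_succ, Nat.add_mul, show a + (i+1) = a + 1 + i by ring]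
        ring
      rw [Finset.sum_congr rfl step, Finset.sum_add_distrib]
      have h1 : (∑ i ∈ range (d+1), (a+(i+1)).choose (i+1) * (b+(d-i)).choose (d-i))
          + (a+1+0).choose 0 * (b+(d+1-0)).choose (d+1-0)
          = ∑ i ∈ range (d+2), (a+i).choose i * (b+(d+1-i)).choose (d+1-i) := by
        conv_rhs => rw [Finset.sum_range_succ']
        congr 1
        · apply Finset.sum_congr rfl
          intro i hi
          rw [show d + 1 - (i+1) = d - i by omega]
        · simp
      have h2 := ih (d+1)
      rw [show d+1+1 = d+2 by ring] at h2
      rw [show a + b + (d+1) + 1 = a + b + d + 2 by ring] at h2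
      rw [show a + 1 + b + d + 1 = a + b + d + 2 by ring] at ihd
      rw [show a + 1 + b + (d+1) + 1 = (a+b+d+2) + 1 by ring,
        show ((a+b+d+2)+1).choose (d+1) = (a+b+d+2).choose d + (a+b+d+2).choose (d+1) from
          Nat.choose_succ_succ _ _]
      omega

lemma sp_zero (m : ℕ) : sp 0 m = 1 := by simp [sp]

lemma sp_conv (d a b : ℕ) (ha : 1 ≤ a) (hb : 1 ≤ b) :
    ∑ i ∈ range (d+1), sp (d-i) a * sp i b = sp d (a+b) := by
  have key := vand (b-1) (a-1) d
  have h : ∀ i ∈ range (d+1),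
      sp (d-i) a * sp i b = (b-1+i).choose i * (a-1+(d-i)).choose (d-i) := by
    intro i hi
    unfold sp
    rw [show a + (d-i) - 1 = a-1+(d-i) by omega, show b + i - 1 = b-1+i by omega]
    ring
  rw [Finset.sum_congr rfl h, key]
  unfold sp
  congr 1
  omega

lemma sp_split (d a b : ℕ) (hd : 2 ≤ d) (ha : 1 ≤ a) (hb : 1 ≤ b) :
    sp d (a+b) = sp d a + sp d b + ∑ i ∈ Finset.Icc 1 (d-1), sp (d-i) a * sp i b := by
  have h := sp_conv d a b ha hb
  rw [Finset.sum_range_succ'] at h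
  have h2 : ∑ i ∈ Finset.Icc 1 (d-1), sp (d-i) a * sp i b
      = ∑ k ∈ range (d-1), sp (d-(k+1)) a * sp (k+1) b := by
    rw [← Finset.Ico_add_one_right_eq_Icc, show d-1+1 = d by omega, Finset.sum_Ico_eq_sum_range]
    apply Finset.sum_congr rfl
    intro i _; rw [Nat.add_comm 1 i]
  have h3 := Finset.sum_range_succ (fun k => sp (d-(k+1)) a * sp (k+1) b) (d-1)
  rw [show d-1+1 = d by omega] at h3
  simp only [Nat.sub_self, sp_zero, one_mul] at h3
  rw [Nat.sub_zero, sp_zero, mul_one] at h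
  omega

lemma sp_pos (j m : ℕ) (hm : 1 ≤ m) : 0 < sp j m := Nat.choose_pos (by omega)

lemma sp_ne_zero (j m : ℕ) (hm : 1 ≤ m) : ((sp j m : ℚ)) ≠ 0 := by
  exact_mod_cast (sp_pos j m hm).ne'

lemma spFact_ne_zero (d n : ℕ) : spFact d n ≠ 0 := by
  unfold spFact
  apply Finset.prod_ne_zero_iff.2
  intro k hk
  exact sp_ne_zero d k (Finset.mem_Icc.1 hk).1

lemma spFact_succ (d m : ℕ) : spFact d (m+1) = spFact d m * (sp d (m+1) : ℚ) := by
  unfold spFact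
  exact Finset.prod_Icc_succ_top (by omega) _

lemma hog_zero (d n : ℕ) : hog d n 0 = 1 := by
  unfold hog
  have : spFact d 0 = 1 := by unfold spFact; simp
  rw [this, Nat.sub_zero, one_mul, div_self (spFact_ne_zero d n)]

lemma hog_self (d n : ℕ) : hog d n n = 1 := by
  unfold hog
  have : spFact d 0 = 1 := by unfold spFact; simp
  rw [Nat.sub_self, this, mul_one, div_self (spFact_ne_zero d n)]

lemma hog_rec (d n j : ℕ) (hd : 2 ≤ d) (hj1 : 1 ≤ j) (hjn : j ≤ n) :
    hog d (n+1) j = hog d n j + hog d n (j-1)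
      + (1 / (sp d (n + 1 - j) : ℚ)) * hog d n j *
          ∑ i ∈ Finset.Icc 1 (d-1), (sp (d - i) (n + 1 - j) : ℚ) * (sp i j : ℚ) := by
  have hsum : (∑ i ∈ Finset.Icc 1 (d-1), (sp (d - i) (n + 1 - j) : ℚ) * (sp i j : ℚ))
      = (sp d (n+1) : ℚ) - (sp d (n+1-j) : ℚ) - (sp d j : ℚ) := by
    have h := sp_split d (n+1-j) j hd (by omega) hj1
    rw [show n+1-j+j = n+1 by omega] at h
    have := congrArg (fun x : ℕ => (x : ℚ)) h
    push_cast at this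
    linarith
  have hj : spFact d j = spFact d (j-1) * (sp d j : ℚ) := by
    conv_lhs => rw [show j = (j-1)+1 by omega]
    rw [spFact_succ, show j-1+1 = j by omega]
  unfold hog
  rw [hsum]
  rw [show n+1-j = n-j+1 by omega, show n-(j-1) = n-j+1 by omega]
  rw [spFact_succ d n, spFact_succ d (n-j), hj]
  have hA := spFact_ne_zero d n
  have hB := spFact_ne_zero d (j-1)
  have hC := spFact_ne_zero d (n-j)
  have hp := sp_ne_zero d j (by omega)
  have hq := sp_ne_zero d (n-j+1) (by omega)
  have hr := sp_ne_zero d (n+1) (by omega)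
  field_simp
  ring

theorem bivarHoggatt_recurrence (d n : ℕ) (hd : 2 ≤ d) :
    bivarHoggatt d (n + 1) =
      (X 0 + X 1) * bivarHoggatt d n +
        ∑ k ∈ Finset.Icc 1 n,
          C ((1 / (sp d (n + 1 - k) : ℚ)) * hog d n k *
              ∑ i ∈ Finset.Icc 1 (d - 1), (sp (d - i) (n + 1 - k) : ℚ) * (sp i k : ℚ)) *
            X 0 ^ (n + 1 - k) * X 1 ^ k := by
  have key : ∀ k ∈ Finset.range n,
      (C (hog d (n+1) (k+1)) * X 0 ^ (n+1-(k+1)) * X 1 ^ (k+1) : MvPolynomial (Fin 2) ℚ)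
      = C (hog d n (k+1)) * X 0 ^ (n+1-(k+1)) * X 1 ^ (k+1)
        + C (hog d n k) * X 0 ^ (n-k) * X 1 ^ (k+1)
        + C ((1 / (sp d (n + 1 - (k+1)) : ℚ)) * hog d n (k+1) *
            ∑ i ∈ Finset.Icc 1 (d - 1), (sp (d - i) (n + 1 - (k+1)) : ℚ) * (sp i (k+1) : ℚ))
            * X 0 ^ (n+1-(k+1)) * X 1 ^ (k+1) := by
    intro k hk
    have hk' := Finset.mem_range.1 hk
    rw [hog_rec d n (k+1) hd (by omega) (by omega), map_add, map_add,
      show (k+1)-1 = k by omega, show n+1-(k+1) = n-k by omega]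
    ring
  have hmul : (X 0 + X 1 : MvPolynomial (Fin 2) ℚ) *
        ∑ k ∈ Finset.range (n+1), C (hog d n k) * X 0 ^ (n-k) * X 1 ^ k
      = (∑ k ∈ Finset.range (n+1), C (hog d n k) * X 0 ^ (n+1-k) * X 1 ^ k)
      + ∑ k ∈ Finset.range (n+1), C (hog d n k) * X 0 ^ (n-k) * X 1 ^ (k+1) := by
    rw [add_mul, Finset.mul_sum, Finset.mul_sum]
    congr 1
    · apply Finset.sum_congr rfl
      intro k hk
      have hk' := Finset.mem_range.1 hk
      rw [show n+1-k = (n-k)+1 by omega]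
      ring
    · apply Finset.sum_congr rfl
      intro k _
      ring
  unfold bivarHoggatt
  rw [hmul]
  rw [Finset.sum_range_succ
    (fun k => (C (hog d (n+1) k) * X 0 ^ (n+1-k) * X 1 ^ k : MvPolynomial (Fin 2) ℚ)) (n+1)]
  rw [Finset.sum_range_succ'
    (fun k => (C (hog d (n+1) k) * X 0 ^ (n+1-k) * X 1 ^ k : MvPolynomial (Fin 2) ℚ)) n]
  rw [Finset.sum_congr rfl key]
  rw [Finset.sum_range_succ'
    (fun k => (C (hog d n k) * X 0 ^ (n+1-k) * X 1 ^ k : MvPolynomial (Fin 2) ℚ)) n]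
  rw [Finset.sum_range_succ
    (fun k => (C (hog d n k) * X 0 ^ (n-k) * X 1 ^ (k+1) : MvPolynomial (Fin 2) ℚ)) n]
  have hSc : (∑ k ∈ Finset.Icc 1 n,
        (C ((1 / (sp d (n + 1 - k) : ℚ)) * hog d n k *
            ∑ i ∈ Finset.Icc 1 (d - 1), (sp (d - i) (n + 1 - k) : ℚ) * (sp i k : ℚ)) *
          X 0 ^ (n + 1 - k) * X 1 ^ k : MvPolynomial (Fin 2) ℚ))
      = ∑ k ∈ Finset.range n,
        (C ((1 / (sp d (n + 1 - (k+1)) : ℚ)) * hog d n (k+1) *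
            ∑ i ∈ Finset.Icc 1 (d - 1), (sp (d - i) (n + 1 - (k+1)) : ℚ) * (sp i (k+1) : ℚ)) *
          X 0 ^ (n + 1 - (k+1)) * X 1 ^ (k+1) : MvPolynomial (Fin 2) ℚ) := by
    rw [← Finset.Ico_add_one_right_eq_Icc, Finset.sum_Ico_eq_sum_range]
    simp only [show n + 1 - 1 = n from rfl]
    apply Finset.sum_congr rfl
    intro k _
    rw [Nat.add_comm 1 k]
  rw [hSc, Finset.sum_add_distrib, Finset.sum_add_distrib]
  simp only [hog_zero, hog_self, Nat.sub_self, Nat.sub_zero, pow_zero, mul_one, one_mul]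
  ring
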